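/- arXiv:2008.05003 — 2 statements merged into one kernel-verified Lean document; each statement's English description precedes it below -/
import Mathlib

section
/- Let Φ: B → A be a *-homomorphism between C*-algebras, and suppose both carry strongly continuous circle actions β on B and γ on A with Φ ∘ β_z = γ_z ∘ Φ for all z ∈ 𝕋. If Φ is injective on the fixed-point algebra B^β, then Φ is injective on B. -/
set_option synthInstance.maxHeartbeats 1000000
set_option maxHeartbeats 1000000

open MeasureTheory

/-- Gauge-invariant uniqueness principle: a circle-equivariant *-homomorphism between
C*-algebras carrying strongly continuous circle actions which is injective on the
fixed-point algebra is injective. -/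
theorem equivariant_hom_injective_on_fixed_algebra_implies_injective
    {B : Type*} [NonUnitalNormedRing B] [StarRing B] [CStarRing B]
    [NormedSpace ℂ B] [IsScalarTower ℂ B B] [SMulCommClass ℂ B B] [StarModule ℂ B]
    [CompleteSpace B]
    {A : Type*} [NonUnitalNormedRing A] [StarRing A] [CStarRing A]
    [NormedSpace ℂ A] [IsScalarTower ℂ A A] [SMulCommClass ℂ A A] [StarModule ℂ A]
    [CompleteSpace A]
    (β : Circle → (B ≃⋆ₐ[ℂ] B))
    (hβ1 : ∀ b, β 1 b = b)
    (hβmul : ∀ z w b, β (z * w) b = β z (β w b))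
    (hβcont : ∀ b : B, Continuous fun z => β z b)
    (γ : Circle → (A ≃⋆ₐ[ℂ] A))
    (hγ1 : ∀ a, γ 1 a = a)
    (hγmul : ∀ z w a, γ (z * w) a = γ z (γ w a))
    (hγcont : ∀ a : A, Continuous fun z => γ z a)
    (Φ : B →⋆ₙₐ[ℂ] A)
    (hequiv : ∀ z b, Φ (β z b) = γ z (Φ b))
    (hinj : ∀ b : B, (∀ z, β z b = b) → Φ b = 0 → b = 0) :
    Function.Injective Φ := by
  letI : NonUnitalCStarAlgebra B := ⟨⟩
  letI : NonUnitalCStarAlgebra A := ⟨⟩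
  borelize Circle
  haveI : Nonempty Circle := ⟨1⟩
  let μ : Measure Circle := Measure.haarMeasure ⊤
  haveI hμfin : IsFiniteMeasure μ := by infer_instance
  haveI hμpos : μ.IsOpenPosMeasure := by infer_instance
  haveI hμinv : μ.IsMulLeftInvariant := by infer_instance
  haveI hμsf : SigmaFinite μ := by infer_instance
  have key : ∀ b : B, Φ b = 0 → b = 0 := by
    intro b hb
    set c : B := star b * b with hc
    set f : Circle → B := fun z => β z c with hfdef
    have hf : Continuous f := hβcont c
    have hfi : Integrable f μ :=
      integrableOn_univ.mp (hf.continuousOn.integrableOn_compact isCompact_univ)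
    set E : B := ∫ z, f z ∂μ with hE
    -- E is fixed by the action
    have hfix : ∀ w, β w E = E := by
      intro w
      let T : B →L[ℂ] B :=
        ⟨{ toFun := β w, map_add' := map_add _, map_smul' := map_smul _ },
          (StarAlgEquiv.isometry (β w)).continuous⟩
      have h1 : β w E = ∫ z, β w (f z) ∂μ := (T.integral_comp_comm hfi).symm
      have h2 : (fun z => β w (f z)) = fun z => f (w * z) := by
        funext z
        simp only [hfdef, ← hβmul]
      rw [h1, h2, integral_mul_left_eq_self f w]
    -- Φ E = 0
    have hΦc : Φ c = 0 := by rw [hc, map_mul, map_star, hb, star_zero, zero_mul]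
    have hΦE : Φ E = 0 := by
      let T : B →L[ℂ] A :=
        ⟨{ toFun := Φ, map_add' := map_add _, map_smul' := map_smul _ },
          AddMonoidHomClass.continuous_of_bound Φ 1
            (fun x => by simpa using NonUnitalStarAlgHom.norm_apply_le Φ x)⟩
      have h1 : Φ E = ∫ z, Φ (f z) ∂μ := (T.integral_comp_comm hfi).symm
      have h2 : (fun z => Φ (f z)) = fun _ => (0 : A) := by
        funext z
        rw [hfdef]
        simp only
        rw [hequiv, hΦc, map_zero]
      rw [h1, h2, integral_zero]
    have hE0 : E = 0 := hinj E hfix hΦE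
    -- pass to the unitization
    set g : Circle → Unitization ℂ B := fun z => (f z : Unitization ℂ B) with hgdef
    have hg : Continuous g := (Unitization.isometry_inr (𝕜 := ℂ)).continuous.comp hf
    have hgi : Integrable g μ :=
      integrableOn_univ.mp (hg.continuousOn.integrableOn_compact isCompact_univ)
    have hgnn : ∀ z, 0 ≤ g z := by
      intro z
      have h1 : g z = star ((β z b : B) : Unitization ℂ B) * ((β z b : B) : Unitization ℂ B) := by
        rw [hgdef]
        simp only [hfdef, hc, map_mul, map_star, ← Unitization.inr_star, ← Unitization.inr_mul]
      rw [h1]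
      exact star_mul_self_nonneg _
    have hgint : ∫ z, g z ∂μ = 0 := by
      let T : B →L[ℂ] Unitization ℂ B :=
        ⟨{ toFun := (Unitization.inr : B → Unitization ℂ B),
           map_add' := fun x y => by simp,
           map_smul' := fun r x => by simp },
          (Unitization.isometry_inr (𝕜 := ℂ)).continuous⟩
      calc ∫ z, g z ∂μ = T E := T.integral_comp_comm hfi
        _ = 0 := by rw [hE0]; simp [T]
    have hconvex : Convex ℝ {x : Unitization ℂ B | 0 ≤ x} := by
      intro x hx y hy a b' ha hb' hab
      exact add_nonneg (smul_nonneg ha (show 0 ≤ x from hx)) (smul_nonneg hb' (show 0 ≤ y from hy))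
    have hclosed : IsClosed {x : Unitization ℂ B | 0 ≤ x} := CStarAlgebra.isClosed_nonneg
    have hIn : ∀ V : Set Circle, 0 ≤ ∫ z in V, g z ∂μ := by
      intro V
      by_cases hV : μ V = 0
      · rw [Measure.restrict_eq_zero.mpr hV, integral_zero_measure]
      · have havg : ⨍ z in V, g z ∂μ ∈ {x : Unitization ℂ B | 0 ≤ x} :=
          hconvex.set_average_mem hclosed hV (measure_lt_top μ V).ne
            (Filter.Eventually.of_forall fun z => hgnn z) hgi.integrableOn
        have h1 : ∫ z in V, g z ∂μ = (μ V).toReal • ⨍ z in V, g z ∂μ := by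
          rw [setAverage_eq, ← measureReal_def, smul_inv_smul₀ (by
            simpa [measureReal_def, ENNReal.toReal_eq_zero_iff, hV] using (measure_lt_top μ V).ne)]
        rw [h1]
        exact smul_nonneg ENNReal.toReal_nonneg havg
    have hsets : ∀ U : Set Circle, MeasurableSet U → μ U < ⊤ → ∫ z in U, g z ∂μ = 0 := by
      intro U hU _
      have h1 : ∫ z in U, g z ∂μ + ∫ z in Uᶜ, g z ∂μ = 0 := by
        rw [integral_add_compl hU hgi, hgint]
      exact ((add_eq_zero_iff_of_nonneg (hIn U) (hIn Uᶜ)).mp h1).1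
    have hg0 : g =ᵐ[μ] 0 :=
      ae_eq_zero_of_forall_setIntegral_eq_of_sigmaFinite (fun s _ _ => hgi.integrableOn) hsets
    have hgzero : g = 0 := (hg.ae_eq_iff_eq μ continuous_const).mp hg0
    have hc0' : c = 0 := by
      have h1 := congrFun hgzero 1
      simp only [hgdef, hfdef, hβ1, Pi.zero_apply] at h1
      exact Unitization.inr_injective h1
    exact (CStarRing.star_mul_self_eq_zero_iff b).mp (hc ▸ hc0')
  intro x y hxy
  have h1 : Φ (x - y) = 0 := by rw [map_sub, hxy, sub_self]
  exact sub_eq_zero.mp (key _ h1)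
end

section
/- Let {T_i}_{i∈I} be partial isometries on a Hilbert space with mutually orthogonal final projections satisfying T_i* T_i = Σ_{j∈I} A_{ij} T_j T_j* (SOT) for a 0-1 matrix A. Suppose there is a finite set Y ⊆ I such that A(∅, Y, j) := ∏_{y∈Y}(1 − A_{yj}) is zero for all but finitely many j ∈ I, and let J₂ = {j : A(∅,Y,j) ≠ 0} (a finite set). Then, by inclusion–exclusion, Σ_{∅≠Z⊆Y} (−1)^{|Z|+1} ∏_{z∈Z} T_z* T_z = Σ_{j : A(∅,Y,j)=0} T_j T_j* in the strong operator topology, and the element U = Σ_{∅≠Z⊆Y} (−1)^{|Z|+1} ∏_{z∈Z} T_z* T_z + Σ_{j∈J₂} T_j T_j* satisfies U T_i = T_i = T_i U for all i ∈ I. -/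
open Filter ContinuousLinearMap

open Filter ContinuousLinearMap
set_option maxHeartbeats 1000000

section Helpers
open scoped Classical

variable {H : Type*} [NormedAddCommGroup H] [NormedSpace ℂ H]
variable {I : Type*} {A : I → I → ℂ} {Q P : I → H →L[ℂ] H}

lemma el_PQ_apply (hQmul : ∀ i j, Q i ∘L Q j = if i = j then Q i else 0)
    (hCK : ∀ i (ξ : H), Tendsto (fun F : Finset I => ∑ j ∈ F, A i j • (Q j ξ))
      atTop (nhds (P i ξ)))
    (z i : I) (ξ : H) : P z (Q i ξ) = A z i • Q i ξ := by
  classical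
  have h2 : ∀ᶠ F : Finset I in atTop,
      (∑ j ∈ F, A z j • (Q j (Q i ξ))) = A z i • Q i ξ := by
    filter_upwards [eventually_ge_atTop ({i} : Finset I)] with F hF
    rw [Finset.sum_eq_single i]
    · have h := congrArg (fun (f : H →L[ℂ] H) => f ξ) (hQmul i i)
      simp at h
      rw [h]
    · intro b _ hbi
      have h := congrArg (fun (f : H →L[ℂ] H) => f ξ) (hQmul b i)
      rw [if_neg hbi] at h
      simp only [comp_apply, zero_apply] at h
      rw [h, smul_zero]
    · intro hi; exact absurd (hF (Finset.mem_singleton_self i)) hi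
  exact (tendsto_nhds_unique tendsto_const_nhds
    (Tendsto.congr' h2 (hCK z (Q i ξ)))).symm

lemma el_prodQ (hQmul : ∀ i j, Q i ∘L Q j = if i = j then Q i else 0)
    (hCK : ∀ i (ξ : H), Tendsto (fun F : Finset I => ∑ j ∈ F, A i j • (Q j ξ))
      atTop (nhds (P i ξ)))
    (Z : Finset I) (i : I) :
    ∀ (comm : (↑Z : Set I).Pairwise (Function.onFun Commute P)),
      (Z.noncommProd P comm) ∘L Q i = (∏ z ∈ Z, A z i) • Q i := by
  classical
  induction Z using Finset.induction_on with
  | empty =>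
      intro comm
      simp [Finset.noncommProd_empty, ContinuousLinearMap.one_def]
  | @insert a Z' ha IH =>
      intro comm
      rw [Finset.noncommProd_insert_of_notMem _ _ _ _ ha, mul_def, comp_assoc, IH,
        comp_smul, Finset.prod_insert ha]
      ext ξ
      simp only [smul_apply, comp_apply]
      rw [el_PQ_apply hQmul hCK a i ξ, smul_smul, mul_comm]

lemma el_prod_tendsto (hQmul : ∀ i j, Q i ∘L Q j = if i = j then Q i else 0)
    (hCK : ∀ i (ξ : H), Tendsto (fun F : Finset I => ∑ j ∈ F, A i j • (Q j ξ))
      atTop (nhds (P i ξ)))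
    (Z : Finset I) (hZ : Z.Nonempty) :
    ∀ (comm : (↑Z : Set I).Pairwise (Function.onFun Commute P)) (ξ : H),
      Tendsto (fun F : Finset I => ∑ j ∈ F, (∏ z ∈ Z, A z j) • (Q j ξ)) atTop
        (nhds ((Z.noncommProd P comm) ξ)) := by
  classical
  induction hZ using Finset.Nonempty.cons_induction with
  | singleton a =>
      intro comm ξ
      rw [Finset.noncommProd_singleton]
      simpa [Finset.prod_singleton] using hCK a ξ
  | cons a Z' ha hZ' IH =>
      intro comm ξ
      rw [Finset.noncommProd_cons]
      have key := (((P a).continuous.tendsto _).comp (IH (by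
        intro x hx y hy hxy
        exact comm (by simp [hx]) (by simp [hy]) hxy) ξ))
      rw [ContinuousLinearMap.mul_apply]
      refine key.congr ?_
      intro F
      simp only [Function.comp_apply, map_sum, map_smul]
      refine Finset.sum_congr rfl ?_
      intro j _
      rw [el_PQ_apply hQmul hCK a j ξ, smul_smul, Finset.prod_cons, mul_comm]

lemma el_sum_comp {I : Type*} (s : Finset I)
    (f : I → H →L[ℂ] H) (g : H →L[ℂ] H) : (∑ i ∈ s, f i) ∘L g = ∑ i ∈ s, f i ∘L g := by
  classical
  induction s using Finset.induction_on with
  | empty => simp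
  | insert _ _ h ih => simp [Finset.sum_insert h, add_comp, ih]

lemma el_comp_sum {I : Type*} (s : Finset I)
    (f : I → H →L[ℂ] H) (g : H →L[ℂ] H) : g ∘L (∑ i ∈ s, f i) = ∑ i ∈ s, g ∘L f i := by
  classical
  induction s using Finset.induction_on with
  | empty => simp
  | insert _ _ h ih => simp [Finset.sum_insert h, comp_add, ih]

end Helpers
open scoped Classical

lemma el_incl_excl {I : Type*} (Y : Finset I) (f : I → ℂ) :
    ∑ Z ∈ Y.powerset.filter Finset.Nonempty, (-1 : ℂ) ^ (Z.card + 1) * ∏ z ∈ Z, f z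
      = 1 - ∏ y ∈ Y, (1 - f y) := by
  classical
  have h1 : ∏ y ∈ Y, (1 - f y) = ∑ t ∈ Y.powerset, (-1 : ℂ) ^ t.card * ∏ z ∈ t, f z := by
    have h := Finset.prod_add (fun y => -f y) (fun _ => (1 : ℂ)) Y
    simp only [Finset.prod_const_one, mul_one] at h
    calc ∏ y ∈ Y, (1 - f y) = ∏ y ∈ Y, (-f y + 1) := by
          exact Finset.prod_congr rfl fun y _ => by ring
      _ = ∑ t ∈ Y.powerset, ∏ z ∈ t, (-f z) := h
      _ = ∑ t ∈ Y.powerset, (-1 : ℂ) ^ t.card * ∏ z ∈ t, f z := by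
          refine Finset.sum_congr rfl fun t _ => ?_
          rw [show (fun z => -f z) = fun z => (-1 : ℂ) * f z from funext fun z => by ring]
          rw [Finset.prod_mul_distrib, Finset.prod_const]
  have hnot : ∑ t ∈ Y.powerset.filter (fun t => ¬ t.Nonempty),
      (-1 : ℂ) ^ t.card * ∏ z ∈ t, f z = 1 := by
    have he : Y.powerset.filter (fun t => ¬ t.Nonempty) = {∅} := by
      ext t
      simp [Finset.not_nonempty_iff_eq_empty, Finset.mem_powerset]
      intro h; subst h; exact Finset.empty_subset Y
    rw [he]; simp
  have hsplit := Finset.sum_filter_add_sum_filter_not Y.powerset Finset.Nonempty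
    (fun t => (-1 : ℂ) ^ t.card * ∏ z ∈ t, f z)
  rw [hnot] at hsplit
  have h2 : ∑ Z ∈ Y.powerset.filter Finset.Nonempty, (-1 : ℂ) ^ (Z.card + 1) * ∏ z ∈ Z, f z
      = -∑ Z ∈ Y.powerset.filter Finset.Nonempty, (-1 : ℂ) ^ Z.card * ∏ z ∈ Z, f z := by
    rw [← Finset.sum_neg_distrib]
    exact Finset.sum_congr rfl fun Z _ => by rw [pow_succ]; ring
  rw [h2, h1, ← hsplit]
  ring


open scoped Classical in
/-- If the final projections of the `T i` are mutually orthogonal and the Exel–Laca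
relation CK holds in the strong operator topology, and if `A(∅,Y,j) = ∏_{y∈Y}(1-A_{yj})`
vanishes for all but finitely many `j` (with `J₂` the finite exceptional set), then, by
inclusion–exclusion, `Σ_{∅≠Z⊆Y} (-1)^{|Z|+1} ∏_{z∈Z} T_z*T_z = Σ_{j : A(∅,Y,j)=0} T_jT_j*`
in the strong operator topology, and the element
`U = Σ_{∅≠Z⊆Y} (-1)^{|Z|+1} ∏_{z∈Z} T_z*T_z + Σ_{j∈J₂} T_jT_j*` is a unit for the `T i`. -/
theorem exel_laca_unit
    {H : Type*} [NormedAddCommGroup H] [InnerProductSpace ℂ H] [CompleteSpace H]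
    {I : Type*} (T : I → H →L[ℂ] H) (A : I → I → ℂ)
    (hA : ∀ i j, A i j = 0 ∨ A i j = 1)
    (hrows : ∀ i, ∃ j, A i j = 1)
    (hpi : ∀ i, T i ∘L adjoint (T i) ∘L T i = T i)
    (horth : ∀ i j, i ≠ j → (T i ∘L adjoint (T i)) ∘L (T j ∘L adjoint (T j)) = 0)
    (hcomm : ∀ i j, Commute (adjoint (T i) ∘L T i) (adjoint (T j) ∘L T j))
    (hCK : ∀ i, ∀ ξ : H,
      Tendsto (fun F : Finset I => ∑ j ∈ F, A i j • ((T j ∘L adjoint (T j)) ξ))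
        atTop (nhds ((adjoint (T i) ∘L T i) ξ)))
    (Y : Finset I) (J₂ : Finset I)
    (hJ₂ : ∀ j, j ∈ J₂ ↔ ∏ y ∈ Y, (1 - A y j) ≠ 0)
    (S U : H →L[ℂ] H)
    (hS : S = ∑ Z ∈ Y.powerset.filter Finset.Nonempty,
      ((-1 : ℂ)) ^ (Z.card + 1) •
        Z.noncommProd (fun z => adjoint (T z) ∘L T z) (fun a _ b _ _ => hcomm a b))
    (hU : U = S + ∑ j ∈ J₂, T j ∘L adjoint (T j)) :
    (∀ ξ : H,
      Tendsto (fun F : Finset I =>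
          ∑ j ∈ F.filter (fun j => ∏ y ∈ Y, (1 - A y j) = 0), (T j ∘L adjoint (T j)) ξ)
        atTop (nhds (S ξ))) ∧
    (∀ i, U ∘L T i = T i ∧ T i ∘L U = T i) := by
  classical
  have hQmul : ∀ i j, (T i ∘L adjoint (T i)) ∘L (T j ∘L adjoint (T j)) =
      if i = j then T i ∘L adjoint (T i) else 0 := by
    intro i j
    by_cases h : i = j
    · subst h
      rw [if_pos rfl, ← comp_assoc, comp_assoc (T i) (adjoint (T i)) (T i), hpi i]
    · rw [if_neg h]; exact horth i j h
  have hπ : ∀ j, (∏ y ∈ Y, (1 - A y j)) = 0 ∨ (∏ y ∈ Y, (1 - A y j)) = 1 := by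
    intro j
    by_cases h : (∏ y ∈ Y, (1 - A y j)) = 0
    · exact Or.inl h
    · refine Or.inr (Finset.prod_eq_one fun y hy => ?_)
      rcases hA y j with h0 | h1
      · rw [h0]; ring
      · exact absurd (Finset.prod_eq_zero hy (by rw [h1]; ring)) h
  have hJ₂' : ∀ j, j ∈ J₂ ↔ (∏ y ∈ Y, (1 - A y j)) = 1 := by
    intro j
    rw [hJ₂ j]
    rcases hπ j with h | h <;> simp [h]
  have hPQ : ∀ z i (ξ : H), (adjoint (T z) ∘L T z) ((T i ∘L adjoint (T i)) ξ) =
      A z i • (T i ∘L adjoint (T i)) ξ :=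
    el_PQ_apply (Q := fun j => T j ∘L adjoint (T j))
      (P := fun i => adjoint (T i) ∘L T i) hQmul hCK
  have hSQ : ∀ k, S ∘L (T k ∘L adjoint (T k)) =
      (1 - ∏ y ∈ Y, (1 - A y k)) • (T k ∘L adjoint (T k)) := by
    intro k
    rw [hS, el_sum_comp, ← el_incl_excl Y (fun z => A z k), Finset.sum_smul]
    refine Finset.sum_congr rfl fun Z hZ => ?_
    rw [ContinuousLinearMap.smul_comp,
      el_prodQ (Q := fun j => T j ∘L adjoint (T j))
        (P := fun i => adjoint (T i) ∘L T i) hQmul hCK Z k (fun a _ b _ _ => hcomm a b),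
      smul_smul]
  have hSQa : ∀ k (ξ : H), S ((T k ∘L adjoint (T k)) ξ) =
      (1 - ∏ y ∈ Y, (1 - A y k)) • (T k ∘L adjoint (T k)) ξ := fun k ξ =>
    congrArg (fun (f : H →L[ℂ] H) => f ξ) (hSQ k)
  have hPQop : ∀ z j, (adjoint (T z) ∘L T z) ∘L (T j ∘L adjoint (T j)) =
      A z j • (T j ∘L adjoint (T j)) := by
    intro z j
    ext ξ
    simpa only [ContinuousLinearMap.comp_apply, ContinuousLinearMap.smul_apply]
      using hPQ z j ξ
  have hQT : ∀ i, (T i ∘L adjoint (T i)) ∘L T i = T i := by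
    intro i
    rw [comp_assoc]; exact hpi i
  constructor
  · intro ξ
    have key : Tendsto (fun F : Finset I =>
        ∑ j ∈ F, (1 - ∏ y ∈ Y, (1 - A y j)) • ((T j ∘L adjoint (T j)) ξ)) atTop
        (nhds (S ξ)) := by
      have hSξ : S ξ = ∑ Z ∈ Y.powerset.filter Finset.Nonempty,
          (-1 : ℂ) ^ (Z.card + 1) • ((Z.noncommProd (fun z => adjoint (T z) ∘L T z)
            (fun a _ b _ _ => hcomm a b)) ξ) := by
        rw [hS]
        simp only [ContinuousLinearMap.sum_apply, ContinuousLinearMap.smul_apply]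
      rw [hSξ]
      have base := tendsto_finset_sum (Y.powerset.filter Finset.Nonempty)
        (fun Z hZ => Tendsto.const_smul
          (el_prod_tendsto (Q := fun j => T j ∘L adjoint (T j))
            (P := fun i => adjoint (T i) ∘L T i) hQmul hCK Z
            (Finset.mem_filter.mp hZ).2 (fun a _ b _ _ => hcomm a b) ξ)
          ((-1 : ℂ) ^ (Z.card + 1)))
      refine base.congr fun F => ?_
      simp only [Finset.smul_sum]
      rw [Finset.sum_comm]
      refine Finset.sum_congr rfl fun j _ => ?_
      rw [← el_incl_excl Y (fun z => A z j), Finset.sum_smul]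
      refine Finset.sum_congr rfl fun Z _ => ?_
      rw [smul_smul]
    refine key.congr fun F => ?_
    rw [Finset.sum_filter]
    refine Finset.sum_congr rfl fun j _ => ?_
    rcases hπ j with h | h
    · rw [h]; simp
    · rw [h]; simp
  · have hUQ : ∀ k, U ∘L (T k ∘L adjoint (T k)) = T k ∘L adjoint (T k) := by
      intro k
      rw [hU, ContinuousLinearMap.add_comp, hSQ k]
      have hs : (∑ j ∈ J₂, T j ∘L adjoint (T j)) ∘L (T k ∘L adjoint (T k)) =
          if k ∈ J₂ then T k ∘L adjoint (T k) else 0 := by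
        rw [el_sum_comp, Finset.sum_congr rfl (fun j _ => hQmul j k)]
        exact Finset.sum_ite_eq' J₂ k _
      rw [hs]
      by_cases hk : k ∈ J₂
      · rw [if_pos hk, (hJ₂' k).mp hk]
        simp
      · rw [if_neg hk]
        have h0 : (∏ y ∈ Y, (1 - A y k)) = 0 := by
          rcases hπ k with h | h
          · exact h
          · exact absurd ((hJ₂' k).mpr h) hk
        rw [h0]
        simp
    have hSP : ∀ i (ξ : H), S ((adjoint (T i) ∘L T i) ξ) =
        (adjoint (T i) ∘L T i) ξ - ∑ j ∈ J₂, A i j • ((T j ∘L adjoint (T j)) ξ) := by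
      intro i ξ
      have t1 : Tendsto (fun F : Finset I => ∑ j ∈ F,
          (A i j * (1 - ∏ y ∈ Y, (1 - A y j))) • ((T j ∘L adjoint (T j)) ξ)) atTop
          (nhds (S ((adjoint (T i) ∘L T i) ξ))) := by
        have hc := (S.continuous.tendsto ((adjoint (T i) ∘L T i) ξ)).comp (hCK i ξ)
        refine hc.congr fun F => ?_
        simp only [Function.comp_apply, map_sum, map_smul]
        refine Finset.sum_congr rfl fun j _ => ?_
        rw [hSQa j ξ, smul_smul]
      have ha : Tendsto (fun F : Finset I =>
          (∑ j ∈ F, A i j • ((T j ∘L adjoint (T j)) ξ)) -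
            ∑ j ∈ J₂, A i j • ((T j ∘L adjoint (T j)) ξ)) atTop
          (nhds ((adjoint (T i) ∘L T i) ξ -
            ∑ j ∈ J₂, A i j • ((T j ∘L adjoint (T j)) ξ))) :=
        (hCK i ξ).sub tendsto_const_nhds
      have t2 : Tendsto (fun F : Finset I => ∑ j ∈ F,
          (A i j * (1 - ∏ y ∈ Y, (1 - A y j))) • ((T j ∘L adjoint (T j)) ξ)) atTop
          (nhds ((adjoint (T i) ∘L T i) ξ -
            ∑ j ∈ J₂, A i j • ((T j ∘L adjoint (T j)) ξ))) := by
        refine Tendsto.congr' ?_ ha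
        filter_upwards [eventually_ge_atTop J₂] with F hF
        have hv : ∀ j ∈ F, j ∉ J₂ →
            (A i j * ∏ y ∈ Y, (1 - A y j)) • ((T j ∘L adjoint (T j)) ξ) = 0 := by
          intro j _ hj
          have h0 : (∏ y ∈ Y, (1 - A y j)) = 0 := by
            rcases hπ j with h | h
            · exact h
            · exact absurd ((hJ₂' j).mpr h) hj
          rw [h0, mul_zero, zero_smul]
        have hsub : ∑ j ∈ F, (A i j * ∏ y ∈ Y, (1 - A y j)) • ((T j ∘L adjoint (T j)) ξ) =
            ∑ j ∈ J₂, A i j • ((T j ∘L adjoint (T j)) ξ) := by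
          rw [← Finset.sum_subset hF hv]
          refine Finset.sum_congr rfl fun j hj => ?_
          rw [(hJ₂' j).mp hj, mul_one]
        rw [← hsub, ← Finset.sum_sub_distrib]
        refine Finset.sum_congr rfl fun j _ => ?_
        rw [mul_one_sub, sub_smul]
      exact tendsto_nhds_unique t1 t2
    have hPU : ∀ i, (adjoint (T i) ∘L T i) ∘L U = adjoint (T i) ∘L T i := by
      intro i
      have hcomS : (adjoint (T i) ∘L T i) ∘L S = S ∘L (adjoint (T i) ∘L T i) := by
        have hcS : Commute (adjoint (T i) ∘L T i) S := by
          rw [hS]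
          refine Commute.sum_right _ _ _ fun Z _ => ?_
          exact (Finset.noncommProd_commute _ _ _ _ fun x _ => hcomm i x).smul_right _
        simpa only [ContinuousLinearMap.mul_def] using hcS.eq
      rw [hU, ContinuousLinearMap.comp_add, hcomS, el_comp_sum,
        Finset.sum_congr rfl (fun j _ => hPQop i j)]
      ext ξ
      simp only [ContinuousLinearMap.add_apply, ContinuousLinearMap.comp_apply,
        ContinuousLinearMap.sum_apply, ContinuousLinearMap.smul_apply]
      have h := hSP i ξ
      simp only [ContinuousLinearMap.comp_apply, ContinuousLinearMap.smul_apply] at h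
      rw [h]
      exact sub_add_cancel _ _
    refine fun i => ⟨?_, ?_⟩
    · calc U ∘L T i = U ∘L ((T i ∘L adjoint (T i)) ∘L T i) := by rw [hQT i]
        _ = (U ∘L (T i ∘L adjoint (T i))) ∘L T i := (comp_assoc _ _ _).symm
        _ = (T i ∘L adjoint (T i)) ∘L T i := by rw [hUQ i]
        _ = T i := hQT i
    · calc T i ∘L U = (T i ∘L (adjoint (T i) ∘L T i)) ∘L U := by rw [hpi i]
        _ = T i ∘L ((adjoint (T i) ∘L T i) ∘L U) := comp_assoc _ _ _
        _ = T i ∘L (adjoint (T i) ∘L T i) := by rw [hPU i]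
        _ = T i := hpi i
end
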